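/- For the soft threshold risk R(μ,λ) = E(s_λ(Z+μ) - μ)² with Z standard normal, the partial derivative in μ satisfies ∂R(μ,λ)/∂μ = 2μ P{|Z+μ| ≤ λ}; consequently R(μ,λ) ≤ R(0,λ) + min(μ², λ²+1) for all μ and all λ ≥ 0. -/

import Mathlib

open MeasureTheory Set

noncomputable def stdPDF (x : ℝ) : ℝ := Real.exp (-x^2/2) / Real.sqrt (2*Real.pi)

/-- Soft threshold function s_λ(x) = sgn(x)(|x|-λ)_+. -/
noncomputable def soft (lam x : ℝ) : ℝ := Real.sign x * max (|x| - lam) 0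

/-- Soft threshold risk R(μ,λ) = ∫ (s_λ(x+μ)-μ)² φ(x) dx. -/
noncomputable def softRisk (mu lam : ℝ) : ℝ := ∫ x, (soft lam (x + mu) - mu)^2 * stdPDF x

/-! ### Auxiliary lemmas -/

lemma soft_eq {lam : ℝ} (hlam : 0 ≤ lam) (x : ℝ) :
    soft lam x = if lam < x then x - lam else if x < -lam then x + lam else 0 := by
  unfold soft
  split_ifs with h1 h2
  · rw [Real.sign_of_pos (by linarith), abs_of_pos (by linarith), one_mul,
      max_eq_left (by linarith)]
  · rw [Real.sign_of_neg (by linarith), abs_of_neg (by linarith),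
      max_eq_left (by linarith)]
    ring
  · rw [max_eq_right (by rcases abs_cases x with ⟨h,_⟩|⟨h,_⟩ <;> linarith), mul_zero]

lemma stdPDF_nonneg (x : ℝ) : 0 ≤ stdPDF x :=
  div_nonneg (Real.exp_pos _).le (Real.sqrt_nonneg _)

lemma stdPDF_cont : Continuous stdPDF := by
  unfold stdPDF; fun_prop

lemma stdPDF_eq (x : ℝ) : stdPDF x = Real.exp (-(1/2) * x^2) * (Real.sqrt (2*Real.pi))⁻¹ := by
  unfold stdPDF; rw [div_eq_mul_inv]; ring_nf

lemma stdPDF_neg (x : ℝ) : stdPDF (-x) = stdPDF x := by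
  unfold stdPDF; rw [neg_sq]

lemma sqrt_two_pi_pos : (0:ℝ) < Real.sqrt (2*Real.pi) :=
  Real.sqrt_pos.2 (by positivity)

lemma integrable_stdPDF : Integrable stdPDF := by
  refine (((integrable_exp_neg_mul_sq (by norm_num : (0:ℝ) < 1/2)).mul_const
    ((Real.sqrt (2*Real.pi))⁻¹)).congr ?_)
  filter_upwards with x
  rw [stdPDF_eq]

lemma integrable_mul_stdPDF : Integrable (fun x => x * stdPDF x) := by
  refine (((integrable_mul_exp_neg_mul_sq (by norm_num : (0:ℝ) < 1/2)).mul_const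
    ((Real.sqrt (2*Real.pi))⁻¹)).congr ?_)
  filter_upwards with x
  rw [stdPDF_eq]; ring

lemma integrable_sq_mul_stdPDF : Integrable (fun x => x^2 * stdPDF x) := by
  have h := (integrable_rpow_mul_exp_neg_mul_sq (by norm_num : (0:ℝ) < 1/2)
    (by norm_num : (-1:ℝ) < 2)).mul_const ((Real.sqrt (2*Real.pi))⁻¹)
  refine h.congr ?_
  filter_upwards with x
  rw [stdPDF_eq, show ((2:ℝ)) = ((2:ℕ):ℝ) by norm_num, Real.rpow_natCast]
  ring

lemma integrable_abs_mul_stdPDF : Integrable (fun x => |x| * stdPDF x) := by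
  refine integrable_mul_stdPDF.abs.congr ?_
  filter_upwards with x
  rw [abs_mul, abs_of_nonneg (stdPDF_nonneg x)]

lemma integrable_quad (a b c : ℝ) : Integrable (fun x => (a*x^2 + b*|x| + c) * stdPDF x) := by
  refine (((integrable_sq_mul_stdPDF.const_mul a).add
    (integrable_abs_mul_stdPDF.const_mul b)).add (integrable_stdPDF.const_mul c)).congr ?_
  filter_upwards with x; simp only [Pi.add_apply]; ring

lemma integrable_quad' (a b c : ℝ) : Integrable (fun x => (a*x^2 + b*x + c) * stdPDF x) := by
  refine (((integrable_sq_mul_stdPDF.const_mul a).add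
    (integrable_mul_stdPDF.const_mul b)).add (integrable_stdPDF.const_mul c)).congr ?_
  filter_upwards with x; simp only [Pi.add_apply]; ring

lemma integral_exp_half : ∫ x : ℝ, Real.exp (-(1/2) * x^2) = Real.sqrt (2*Real.pi) := by
  rw [integral_gaussian, show Real.pi / (1/2) = 2 * Real.pi by ring]

lemma integral_stdPDF : ∫ x : ℝ, stdPDF x = 1 := by
  have : (fun x : ℝ => stdPDF x)
      = fun x => Real.exp (-(1/2) * x^2) * (Real.sqrt (2*Real.pi))⁻¹ := funext stdPDF_eq
  rw [this, integral_mul_const, integral_exp_half, mul_inv_cancel₀ sqrt_two_pi_pos.ne']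

lemma integral_sq_exp : ∫ x : ℝ, x^2 * Real.exp (-(1/2) * x^2) = Real.sqrt (2*Real.pi) := by
  have hderiv : ∀ x : ℝ, HasDerivAt (fun x : ℝ => -x * Real.exp (-(1/2)*x^2))
      ((x^2 - 1) * Real.exp (-(1/2)*x^2)) x := by
    intro x
    have hin : HasDerivAt (fun x : ℝ => -(1/2)*x^2) (-(1/2)*((2:ℕ)*x^1)) x :=
      (hasDerivAt_pow 2 x).const_mul (-(1/2))
    have hexp := hin.exp
    have hx : HasDerivAt (fun x : ℝ => -x) (-1) x := (hasDerivAt_id x).neg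
    have := hx.fun_mul hexp
    refine this.congr_deriv ?_
    push_cast
    ring
  have hint2 : Integrable (fun x : ℝ => x^2 * Real.exp (-(1/2) * x^2)) := by
    have h := integrable_rpow_mul_exp_neg_mul_sq (by norm_num : (0:ℝ) < 1/2)
      (by norm_num : (-1:ℝ) < 2)
    refine h.congr ?_
    filter_upwards with x
    rw [show ((2:ℝ)) = ((2:ℕ):ℝ) by norm_num, Real.rpow_natCast]
  have hint0 : Integrable (fun x : ℝ => Real.exp (-(1/2) * x^2)) :=
    integrable_exp_neg_mul_sq (by norm_num)
  have hf' : Integrable (fun x : ℝ => (x^2 - 1) * Real.exp (-(1/2) * x^2)) := by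
    refine (hint2.sub hint0).congr ?_
    filter_upwards with x; simp only [Pi.sub_apply, Pi.neg_apply]; ring
  have hf : Integrable (fun x : ℝ => -x * Real.exp (-(1/2) * x^2)) := by
    refine ((integrable_mul_exp_neg_mul_sq (by norm_num : (0:ℝ) < 1/2)).neg).congr ?_
    filter_upwards with x; simp only [Pi.sub_apply, Pi.neg_apply]; ring
  have h0 := integral_eq_zero_of_hasDerivAt_of_integrable hderiv hf' hf
  have hsplit : ∫ x : ℝ, (x^2 - 1) * Real.exp (-(1/2) * x^2)
      = (∫ x : ℝ, x^2 * Real.exp (-(1/2)*x^2)) - ∫ x : ℝ, Real.exp (-(1/2)*x^2) := by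
    rw [← integral_sub hint2 hint0]
    congr 1; funext x; ring
  rw [hsplit, integral_exp_half] at h0
  linarith

lemma integral_sq_stdPDF : ∫ x : ℝ, x^2 * stdPDF x = 1 := by
  have : (fun x : ℝ => x^2 * stdPDF x)
      = fun x => (x^2 * Real.exp (-(1/2) * x^2)) * (Real.sqrt (2*Real.pi))⁻¹ := by
    funext x; rw [stdPDF_eq]; ring
  rw [this, integral_mul_const, integral_sq_exp, mul_inv_cancel₀ sqrt_two_pi_pos.ne']

/-! ### Pointwise inequalities -/

lemma soft_pt1 {lam : ℝ} (hlam : 0 ≤ lam) (mu x : ℝ) :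
    (soft lam (x+mu) - mu)^2 ≤ (soft lam x)^2 + mu^2 := by
  simp only [soft_eq hlam]
  split_ifs <;>
    nlinarith [sq_nonneg (x+lam), sq_nonneg (x-lam), sq_nonneg (mu+lam+x), sq_nonneg (mu-lam+x),
      sq_nonneg (mu+lam-x), sq_nonneg (mu-lam-x), sq_nonneg mu, sq_nonneg x]

lemma soft_pt2 {lam : ℝ} (hlam : 0 ≤ lam) (mu x : ℝ) :
    (soft lam (x+mu) - mu)^2 + (soft lam (-x+mu) - mu)^2 ≤ 2*x^2 + 2*lam^2 := by
  simp only [soft_eq hlam]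
  split_ifs <;>
    nlinarith [sq_nonneg (x+lam), sq_nonneg (x-lam), sq_nonneg (mu+lam+x), sq_nonneg (mu-lam+x),
      sq_nonneg (mu+lam-x), sq_nonneg (mu-lam-x), sq_nonneg mu, sq_nonneg x]

lemma soft_sub_abs {lam : ℝ} (hlam : 0 ≤ lam) (t : ℝ) : |soft lam t - t| ≤ lam := by
  rw [soft_eq hlam]
  split_ifs with h1 h2
  · rw [show t - lam - t = -lam by ring, abs_neg, abs_of_nonneg hlam]
  · rw [show t + lam - t = lam by ring, abs_of_nonneg hlam]
  · rw [zero_sub, abs_neg]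
    exact abs_le.2 ⟨by linarith, by linarith⟩

lemma measurable_soft {lam : ℝ} (hlam : 0 ≤ lam) : Measurable (soft lam) := by
  have : soft lam = fun x => if lam < x then x - lam else if x < -lam then x + lam else 0 :=
    funext (soft_eq hlam)
  rw [this]
  refine Measurable.ite ?_ (by fun_prop) (Measurable.ite ?_ (by fun_prop) (by fun_prop))
  · exact measurableSet_Ioi
  · exact measurableSet_Iio

lemma integrable_f {lam : ℝ} (hlam : 0 ≤ lam) (m : ℝ) :
    Integrable (fun x => (soft lam (x + m) - m)^2 * stdPDF x) := by
  refine (integrable_quad 1 (2*lam) (lam^2)).mono' ?_ ?_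
  · exact (((((measurable_soft hlam).comp (measurable_id.add_const m)).sub
      measurable_const).pow_const 2).mul stdPDF_cont.measurable).aestronglyMeasurable
  · filter_upwards with x
    rw [Real.norm_eq_abs, abs_of_nonneg (mul_nonneg (sq_nonneg _) (stdPDF_nonneg x))]
    have h1 : |soft lam (x+m) - m| ≤ |x| + lam := by
      have h2 := soft_sub_abs hlam (x+m)
      calc |soft lam (x+m) - m| = |(soft lam (x+m) - (x+m)) + x| := by
            rw [show soft lam (x+m) - m = (soft lam (x+m) - (x+m)) + x by ring]
        _ ≤ |soft lam (x+m) - (x+m)| + |x| := abs_add_le _ _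
        _ ≤ |x| + lam := by linarith
    apply mul_le_mul_of_nonneg_right _ (stdPDF_nonneg x)
    calc (soft lam (x+m) - m)^2 = |soft lam (x+m) - m|^2 := (sq_abs _).symm
      _ ≤ (|x| + lam)^2 := by nlinarith [abs_nonneg (soft lam (x+m) - m)]
      _ ≤ 1*x^2 + 2*lam*|x| + lam^2 := by nlinarith [sq_abs x]

/-! ### FTC helper and one-sided antiderivatives -/

lemma hasDerivAt_integral_Iic {h : ℝ → ℝ} (hc : Continuous h) (hi : Integrable h) (a : ℝ) :
    HasDerivAt (fun b => ∫ x in Iic b, h x) (h a) a := by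
  have key : ∀ b : ℝ, ∫ x in Iic b, h x = (∫ x in Iic (0:ℝ), h x) + ∫ x in (0:ℝ)..b, h x := by
    intro b
    rw [← intervalIntegral.integral_Iic_sub_Iic hi.integrableOn hi.integrableOn]
    ring
  have hfun : (fun b : ℝ => ∫ x in Iic b, h x)
      = fun b => (∫ x in Iic (0:ℝ), h x) + ∫ x in (0:ℝ)..b, h x := funext key
  rw [hfun]
  exact ((intervalIntegral.integral_hasDerivAt_right hi.intervalIntegrable
    hc.stronglyMeasurable.stronglyMeasurableAtFilter hc.continuousAt)).const_add _

noncomputable def F1 (lam c : ℝ) : ℝ := ∫ x in Iic c, (x - lam)^2 * stdPDF x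
noncomputable def F2 (lam c : ℝ) : ℝ := ∫ x in Iic c, (x + lam)^2 * stdPDF x
noncomputable def FP (c : ℝ) : ℝ := ∫ x in Iic c, stdPDF x

lemma integrable_h1 (lam : ℝ) : Integrable (fun x : ℝ => (x - lam)^2 * stdPDF x) := by
  refine (integrable_quad' 1 (-2*lam) (lam^2)).congr ?_
  filter_upwards with x; ring_nf

lemma integrable_h2 (lam : ℝ) : Integrable (fun x : ℝ => (x + lam)^2 * stdPDF x) := by
  refine (integrable_quad' 1 (2*lam) (lam^2)).congr ?_
  filter_upwards with x; ring_nf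

lemma F1_hasDeriv (lam c : ℝ) : HasDerivAt (F1 lam) ((c - lam)^2 * stdPDF c) c :=
  hasDerivAt_integral_Iic (((continuous_id.sub continuous_const).pow 2).mul stdPDF_cont) (integrable_h1 lam) c

lemma F2_hasDeriv (lam c : ℝ) : HasDerivAt (F2 lam) ((c + lam)^2 * stdPDF c) c :=
  hasDerivAt_integral_Iic (((continuous_id.add continuous_const).pow 2).mul stdPDF_cont) (integrable_h2 lam) c

lemma FP_hasDeriv (c : ℝ) : HasDerivAt FP (stdPDF c) c :=
  hasDerivAt_integral_Iic stdPDF_cont integrable_stdPDF c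

lemma FP_Ioc {a b : ℝ} (hab : a ≤ b) : ∫ x in Ioc a b, stdPDF x = FP b - FP a := by
  rw [← intervalIntegral.integral_of_le hab,
    ← intervalIntegral.integral_Iic_sub_Iic integrable_stdPDF.integrableOn
      integrable_stdPDF.integrableOn]
  rfl

/-! ### The decomposition of the risk -/

lemma risk_eq {lam : ℝ} (hlam : 0 ≤ lam) (m : ℝ) :
    softRisk m lam = ((∫ x : ℝ, (x - lam)^2 * stdPDF x) - F1 lam (lam - m)) + F2 lam (-lam - m)
      + m^2 * (FP (lam - m) - FP (-lam - m)) := by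
  have hab : -lam - m ≤ lam - m := by linarith
  have hf := integrable_f hlam m
  have h0 : softRisk m lam = (∫ x in Iic (lam - m), (soft lam (x + m) - m)^2 * stdPDF x)
      + ∫ x in Ioi (lam - m), (soft lam (x + m) - m)^2 * stdPDF x := by
    unfold softRisk
    rw [intervalIntegral.integral_Iic_add_Ioi hf.integrableOn hf.integrableOn]
  have h1 : (∫ x in Iic (lam - m), (soft lam (x + m) - m)^2 * stdPDF x)
      = (∫ x in Iic (-lam - m), (soft lam (x + m) - m)^2 * stdPDF x)
        + ∫ x in Ioc (-lam - m) (lam - m), (soft lam (x + m) - m)^2 * stdPDF x := by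
    rw [← setIntegral_union (Iic_disjoint_Ioc le_rfl) measurableSet_Ioc hf.integrableOn
      hf.integrableOn, Iic_union_Ioc_eq_Iic hab]
  have h2 : (∫ x in Iic (-lam - m), (soft lam (x + m) - m)^2 * stdPDF x) = F2 lam (-lam - m) := by
    refine setIntegral_congr_fun measurableSet_Iic (fun x hx => ?_)
    rw [soft_eq hlam]
    rcases lt_or_eq_of_le (mem_Iic.mp hx) with h | h
    · rw [if_neg (by push_neg; linarith), if_pos (by linarith)]; ring
    · rw [if_neg (by push_neg; linarith), if_neg (by push_neg; linarith), h]; ring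
  have h3 : (∫ x in Ioc (-lam - m) (lam - m), (soft lam (x + m) - m)^2 * stdPDF x)
      = m^2 * (FP (lam - m) - FP (-lam - m)) := by
    have : (∫ x in Ioc (-lam - m) (lam - m), (soft lam (x + m) - m)^2 * stdPDF x)
        = ∫ x in Ioc (-lam - m) (lam - m), m^2 * stdPDF x := by
      refine setIntegral_congr_fun measurableSet_Ioc (fun x hx => ?_)
      rw [soft_eq hlam, if_neg (by push_neg; rcases hx with ⟨_, h⟩; linarith),
        if_neg (by push_neg; rcases hx with ⟨h, _⟩; linarith)]
      ring
    rw [this, integral_const_mul, FP_Ioc hab]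
  have h4 : (∫ x in Ioi (lam - m), (soft lam (x + m) - m)^2 * stdPDF x)
      = (∫ x : ℝ, (x - lam)^2 * stdPDF x) - F1 lam (lam - m) := by
    have e1 : (∫ x in Ioi (lam - m), (soft lam (x + m) - m)^2 * stdPDF x)
        = ∫ x in Ioi (lam - m), (x - lam)^2 * stdPDF x := by
      refine setIntegral_congr_fun measurableSet_Ioi (fun x hx => ?_)
      rw [soft_eq hlam, if_pos (by simpa [mem_Ioi] using by linarith [mem_Ioi.mp hx] : lam < x + m)]
      ring
    have e2 := intervalIntegral.integral_Iic_add_Ioi (b := lam - m) (integrable_h1 lam).integrableOn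
      (integrable_h1 lam).integrableOn
    rw [e1]
    have : F1 lam (lam - m) = ∫ x in Iic (lam - m), (x - lam)^2 * stdPDF x := rfl
    linarith
  rw [h0, h1, h2, h3, h4]
  ring

/-! ### The derivative -/

lemma deriv_risk {lam : ℝ} (hlam : 0 ≤ lam) (mu : ℝ) :
    HasDerivAt (fun m => softRisk m lam) (2*mu*(FP (lam - mu) - FP (-lam - mu))) mu := by
  have hfun : (fun m => softRisk m lam) = fun m =>
      ((∫ x : ℝ, (x - lam)^2 * stdPDF x) - F1 lam (lam - m)) + F2 lam (-lam - m)
        + m^2 * (FP (lam - m) - FP (-lam - m)) := funext (risk_eq hlam)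
  rw [hfun]
  have hg1 : HasDerivAt (fun m : ℝ => lam - m) (-1) mu := (hasDerivAt_id mu).const_sub lam
  have hg2 : HasDerivAt (fun m : ℝ => -lam - m) (-1) mu := (hasDerivAt_id mu).const_sub (-lam)
  have dA : HasDerivAt (fun m : ℝ => F1 lam (lam - m))
      (((lam - mu) - lam)^2 * stdPDF (lam - mu) * (-1)) mu :=
    (F1_hasDeriv lam (lam - mu)).comp mu hg1
  have dB : HasDerivAt (fun m : ℝ => F2 lam (-lam - m))
      (((-lam - mu) + lam)^2 * stdPDF (-lam - mu) * (-1)) mu :=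
    (F2_hasDeriv lam (-lam - mu)).comp mu hg2
  have dP1 : HasDerivAt (fun m : ℝ => FP (lam - m)) (stdPDF (lam - mu) * (-1)) mu :=
    (FP_hasDeriv (lam - mu)).comp mu hg1
  have dP2 : HasDerivAt (fun m : ℝ => FP (-lam - m)) (stdPDF (-lam - mu) * (-1)) mu :=
    (FP_hasDeriv (-lam - mu)).comp mu hg2
  have dsq : HasDerivAt (fun m : ℝ => m^2) ((2:ℕ) * mu^1) mu := hasDerivAt_pow 2 mu
  have D := (((hasDerivAt_const mu (∫ x : ℝ, (x - lam)^2 * stdPDF x)).sub dA).add dB).add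
    (dsq.fun_mul (dP1.fun_sub dP2))
  refine D.congr_deriv ?_
  push_cast
  ring

/-! ### Main theorem -/

theorem stmt6 (lam : ℝ) (hlam : 0 ≤ lam) :
    (∀ mu : ℝ, HasDerivAt (fun m => softRisk m lam)
      (2 * mu * ∫ x in {x : ℝ | |x + mu| ≤ lam}, stdPDF x) mu) ∧
    (∀ mu : ℝ, softRisk mu lam ≤ softRisk 0 lam + min (mu^2) (lam^2 + 1)) := by
  constructor
  · intro mu
    have hset : {x : ℝ | |x + mu| ≤ lam} = Icc (-lam - mu) (lam - mu) := by
      ext x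
      simp only [mem_setOf_eq, mem_Icc, abs_le]
      constructor <;> rintro ⟨h1, h2⟩ <;> constructor <;> linarith
    have hval : ∫ x in {x : ℝ | |x + mu| ≤ lam}, stdPDF x = FP (lam - mu) - FP (-lam - mu) := by
      rw [hset, integral_Icc_eq_integral_Ioc, FP_Ioc (by linarith)]
    rw [hval]
    exact deriv_risk hlam mu
  · intro mu
    have hR0 : 0 ≤ softRisk 0 lam :=
      integral_nonneg (fun x => mul_nonneg (sq_nonneg _) (stdPDF_nonneg x))
    have bound_a : softRisk mu lam ≤ softRisk 0 lam + mu^2 := by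
      have hmono : softRisk mu lam ≤ ∫ x : ℝ,
          ((soft lam (x + 0) - 0)^2 * stdPDF x + mu^2 * stdPDF x) := by
        refine integral_mono (integrable_f hlam mu)
          ((integrable_f hlam 0).add (integrable_stdPDF.const_mul (mu^2))) (fun x => ?_)
        have hp := soft_pt1 hlam mu x
        have hφ := stdPDF_nonneg x
        simp only [add_zero, sub_zero]
        nlinarith
      calc softRisk mu lam ≤ _ := hmono
        _ = softRisk 0 lam + mu^2 := by
          rw [integral_add (integrable_f hlam 0) (integrable_stdPDF.const_mul (mu^2)),
            integral_const_mul, integral_stdPDF, mul_one]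
          rfl
    have bound_b : softRisk mu lam ≤ lam^2 + 1 := by
      have hint := integrable_f hlam mu
      have hintneg : Integrable (fun x => (soft lam (-x + mu) - mu)^2 * stdPDF (-x)) :=
        hint.comp_neg
      have hneg_eq : ∫ x : ℝ, (soft lam (-x + mu) - mu)^2 * stdPDF (-x) = softRisk mu lam :=
        integral_neg_eq_self (fun x => (soft lam (x + mu) - mu)^2 * stdPDF x) volume
      have hsum : ∫ x : ℝ, ((soft lam (x + mu) - mu)^2 * stdPDF x
          + (soft lam (-x + mu) - mu)^2 * stdPDF (-x)) = 2 * softRisk mu lam := by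
        rw [integral_add hint hintneg, hneg_eq]
        unfold softRisk; ring
      have hmono : ∫ x : ℝ, ((soft lam (x + mu) - mu)^2 * stdPDF x
          + (soft lam (-x + mu) - mu)^2 * stdPDF (-x))
          ≤ ∫ x : ℝ, (2*x^2 + 0*x + 2*lam^2) * stdPDF x := by
        refine integral_mono (hint.add hintneg) (integrable_quad' 2 0 (2*lam^2)) (fun x => ?_)
        have hp := soft_pt2 hlam mu x
        have hφ := stdPDF_nonneg x
        simp only [stdPDF_neg]
        nlinarith
      have hRHS : ∫ x : ℝ, (2*x^2 + 0*x + 2*lam^2) * stdPDF x = 2 + 2*lam^2 := by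
        have heq : (fun x : ℝ => (2*x^2 + 0*x + 2*lam^2) * stdPDF x)
            = fun x => 2*(x^2 * stdPDF x) + (2*lam^2) * stdPDF x := funext fun x => by ring
        rw [heq, integral_add ((integrable_sq_mul_stdPDF).const_mul 2)
          (integrable_stdPDF.const_mul (2*lam^2)), integral_const_mul, integral_const_mul,
          integral_sq_stdPDF, integral_stdPDF]
        ring
      rw [hRHS] at hmono
      rw [hsum] at hmono
      linarith
    rcases le_total (mu^2) (lam^2 + 1) with h | h
    · rw [min_eq_left h]; exact bound_a
    · rw [min_eq_right h]
      linarith
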